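/- Let m ≥ 0, L ≥ 1 and n be integers with n ≥ m+2, let x > 0 be a real number with n·x ≠ L, and let ω ∈ ℂ with ω ≠ 1. Then ∑_{s=0}^{m} g_s^{(n,L)}(x)·ω^s = ((x − L/n)/x) · [ q̂_m^{(n,L)}(x·ω | x)/(1−ω)² − (x·ω)^{m+1}·Γ(L+n+1)/((1−ω)·(1+x)·Γ(L+m+1)·Γ(n−m)) − ω^{m+1}·(L+m+1 − (n−m−1)·x)·q̂_m^{(n,L)}(x|x)/((1+x)·(1−ω)) − ω^{m+1}·q̂_m^{(n,L)}(x|x)/(1−ω)² ]. -/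

import Mathlib

open Finset

noncomputable section

/-- `g_m^{(n,L)}(x)`. -/
def gP (n L m : ℕ) (x : ℝ) : ℝ :=
  ((x - (L : ℝ) / n) / x) *
      ∑ k ∈ Finset.range (m + 1), ((m : ℝ) + 1 - k) * (Nat.choose (L + n) (L + k) : ℝ) * x ^ k
    + ((L : ℝ) * ((m : ℝ) + 1) / ((n : ℝ) * x)) * (Nat.choose (L + n) L : ℝ)

/-- `q_N^{(n,L)}(y)` for a complex argument `y`. -/
def qSC (n L : ℝ) (N : ℕ) (y : ℂ) : ℂ :=
  ∑ k ∈ Finset.range (N + 1),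
    ((Real.Gamma (L + n + 1) /
        (Real.Gamma ((k : ℝ) + L + 1) * Real.Gamma (n + 1 - k)) : ℝ) : ℂ) * y ^ k

/-- `q̂_N^{(n,L)}(y|x)` for complex arguments. -/
def qhatC (n L : ℝ) (N : ℕ) (y x : ℂ) : ℂ :=
  qSC n L N y + (1 / ((n : ℂ) * x - (L : ℝ))) *
    ((Real.Gamma (L + n + 1) / (Real.Gamma (n + 1) * Real.Gamma L) : ℝ) : ℂ)

/-! ### Auxiliary lemmas -/

lemma geom_partial (ω : ℂ) (P : ℕ → ℂ) (m : ℕ) :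
    (1 - ω) * ∑ s ∈ Finset.range (m+1), (∑ j ∈ Finset.range (s+1), P j) * ω ^ s
      = ∑ j ∈ Finset.range (m+1), P j * ω ^ j - ω ^ (m+1) * ∑ j ∈ Finset.range (m+1), P j := by
  induction m with
  | zero => simp [Finset.sum_range_succ]; ring
  | succ m ih =>
    simp only [Finset.sum_range_succ] at ih ⊢
    linear_combination ih

lemma sum_sum_eq (R : ℕ → ℂ) (s : ℕ) :
    ∑ j ∈ Finset.range (s+1), ∑ k ∈ Finset.range (j+1), R k
      = ∑ k ∈ Finset.range (s+1), ((s:ℂ)+1-(k:ℂ)) * R k := by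
  induction s with
  | zero => simp
  | succ s ih =>
    have h1 : ∑ k ∈ Finset.range (s+1+1), (((s+1:ℕ):ℂ)+1-(k:ℂ))*R k
        = ∑ k ∈ Finset.range (s+1+1), (((s:ℕ):ℂ)+1-(k:ℂ))*R k + ∑ k ∈ Finset.range (s+1+1), R k := by
      rw [← Finset.sum_add_distrib]
      exact Finset.sum_congr rfl (fun k _ => by push_cast; ring)
    rw [Finset.sum_range_succ (fun j => ∑ k ∈ Finset.range (j+1), R k) (s+1), ih, h1,
      Finset.sum_range_succ (fun k => (((s:ℕ):ℂ)+1-(k:ℂ))*R k) (s+1)]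
    push_cast
    ring

lemma star_aux (X Lc nc : ℂ) (B : ℕ → ℂ)
    (hrec : ∀ k : ℕ, (nc - (k:ℂ)) * B k = (Lc + (k:ℂ) + 1) * B (k+1)) (m : ℕ) :
    (1+X) * ∑ k ∈ Finset.range (m+1), ((m:ℂ)+1-(k:ℂ))*B k*X^k + Lc * B 0
      = X^(m+1) * (nc-(m:ℂ)) * B m
        + (Lc+(m:ℂ)+1-(nc-(m:ℂ)-1)*X) * ∑ k ∈ Finset.range (m+1), B k * X^k := by
  induction m with
  | zero => simp; ring
  | succ m ih =>
    have h1 : ∑ k ∈ Finset.range (m+1+1), (((m+1:ℕ):ℂ)+1-(k:ℂ))*B k*X^k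
        = ∑ k ∈ Finset.range (m+1+1), (((m:ℕ):ℂ)+1-(k:ℂ))*B k*X^k
          + ∑ k ∈ Finset.range (m+1+1), B k * X^k := by
      rw [← Finset.sum_add_distrib]
      exact Finset.sum_congr rfl (fun k _ => by push_cast; ring)
    rw [h1, Finset.sum_range_succ (fun k => (((m:ℕ):ℂ)+1-(k:ℂ))*B k*X^k) (m+1),
      Finset.sum_range_succ (fun k => B k * X^k) (m+1)]
    push_cast
    linear_combination ih + X^(m+1) * hrec m

lemma divHelperX (s a b c d u v : ℂ) (hu : u ≠ 0) (hv : v ≠ 0)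
    (h : u^2 * v * s = v * a - u * b - u * c - v * d) :
    s = a/u^2 - b/(u*v) - c/(v*u) - d/u^2 := by
  have h1 : (u:ℂ)^2 ≠ 0 := pow_ne_zero 2 hu
  have h2 : u*v ≠ 0 := mul_ne_zero hu hv
  have h3 : v*u ≠ 0 := mul_ne_zero hv hu
  rw [div_sub_div _ _ h1 h2, div_sub_div _ _ (mul_ne_zero h1 h2) h3,
    div_sub_div _ _ (mul_ne_zero (mul_ne_zero h1 h2) h3) h1,
    eq_div_iff (mul_ne_zero (mul_ne_zero (mul_ne_zero h1 h2) h3) h1)]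
  linear_combination (u^4*v) * h

set_option maxHeartbeats 1000000 in
lemma core_identity (m : ℕ) (X ω E' Lc nc : ℂ) (B : ℕ → ℂ)
    (hrec : ∀ k : ℕ, (nc - (k:ℂ)) * B k = (Lc + (k:ℂ) + 1) * B (k+1))
    (hu : (1:ℂ) - ω ≠ 0) (hP : 1 + X ≠ 0)
    (hE : (nc * X - Lc) * E' = Lc * B 0) :
    ∑ s ∈ Finset.range (m+1),
        (∑ j ∈ Finset.range (s+1), (E' + ∑ k ∈ Finset.range (j+1), B k * X^k)) * ω^s
      = ((∑ k ∈ Finset.range (m+1), B k * (X*ω)^k) + E') / (1-ω)^2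
        - (X*ω)^(m+1) * ((nc-(m:ℂ)) * B m) / ((1-ω) * (1+X))
        - ω^(m+1) * (Lc+(m:ℂ)+1 - (nc-(m:ℂ)-1)*X) *
            ((∑ k ∈ Finset.range (m+1), B k * X^k) + E') / ((1+X) * (1-ω))
        - ω^(m+1) * ((∑ k ∈ Finset.range (m+1), B k * X^k) + E') / (1-ω)^2 := by
  have hA := geom_partial ω (fun j => E' + ∑ k ∈ Finset.range (j+1), B k * X^k) m
  have hB1 := geom_partial ω (fun k => B k * X^k) m
  have hgeo : (1-ω) * ∑ j ∈ Finset.range (m+1), ω^j = 1 - ω^(m+1) := by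
    linear_combination - geom_sum_mul ω (m+1)
  have hsplitP : ∑ j ∈ Finset.range (m+1), (E' + ∑ k ∈ Finset.range (j+1), B k * X^k) * ω^j
      = E' * ∑ j ∈ Finset.range (m+1), ω^j
        + ∑ j ∈ Finset.range (m+1), (∑ k ∈ Finset.range (j+1), B k * X^k) * ω^j := by
    rw [Finset.mul_sum, ← Finset.sum_add_distrib]
    exact Finset.sum_congr rfl fun j _ => by ring
  have hqw : ∑ k ∈ Finset.range (m+1), B k * X^k * ω^k
      = ∑ k ∈ Finset.range (m+1), B k * (X*ω)^k :=
    Finset.sum_congr rfl fun k _ => by rw [mul_pow]; ring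
  have hS : ∑ j ∈ Finset.range (m+1), (E' + ∑ k ∈ Finset.range (j+1), B k * X^k)
      = ((m:ℂ)+1)*E' + ∑ k ∈ Finset.range (m+1), ((m:ℂ)+1-(k:ℂ))*B k*X^k := by
    rw [Finset.sum_add_distrib, Finset.sum_const, Finset.card_range, nsmul_eq_mul,
      sum_sum_eq (fun k => B k * X^k),
      Finset.sum_congr rfl (fun k _ => by ring :
        ∀ k ∈ Finset.range (m+1), ((m:ℂ)+1-(k:ℂ)) * (B k * X^k) = ((m:ℂ)+1-(k:ℂ)) * B k * X^k)]
    push_cast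
    ring
  have hstar := star_aux X Lc nc B hrec m
  have hfin : (1-ω)^2 * (1+X) * (∑ s ∈ Finset.range (m+1),
        (∑ j ∈ Finset.range (s+1), (E' + ∑ k ∈ Finset.range (j+1), B k * X^k)) * ω^s)
      = (1+X) * ((∑ k ∈ Finset.range (m+1), B k * (X*ω)^k) + E')
        - (1-ω) * (X*ω)^(m+1) * ((nc-(m:ℂ)) * B m)
        - (1-ω) * ω^(m+1) * (Lc+(m:ℂ)+1 - (nc-(m:ℂ)-1)*X) *
            ((∑ k ∈ Finset.range (m+1), B k * X^k) + E')
        - (1+X) * ω^(m+1) * ((∑ k ∈ Finset.range (m+1), B k * X^k) + E') := by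
    linear_combination (1-ω)*(1+X)*hA + (1-ω)*(1+X)*hsplitP + (1+X)*E'*hgeo
      + (1+X)*hB1 + (1+X)*hqw - (1-ω)*(1+X)*ω^(m+1)*hS - (1-ω)*ω^(m+1)*hstar
      - (1-ω)*ω^(m+1)*hE + (mul_pow X ω (m+1) ▸ rfl : (X*ω)^(m+1) = X^(m+1)*ω^(m+1))
  exact divHelperX _ _ _ _ _ _ _ hu hP (by linear_combination hfin)

lemma gamma_ratio1 (L n k : ℕ) (hk : k ≤ n) :
    Real.Gamma ((L:ℝ)+n+1) / (Real.Gamma ((k:ℝ)+L+1) * Real.Gamma ((n:ℝ)+1-k))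
      = ((L+n).choose (L+k) : ℝ) := by
  have h1 : ((L:ℝ)+(n:ℝ)+1) = ((L+n : ℕ):ℝ) + 1 := by push_cast; ring
  have h2 : ((k:ℝ)+(L:ℝ)+1) = ((L+k : ℕ):ℝ) + 1 := by push_cast; ring
  have h3 : ((n:ℝ)+1-(k:ℝ)) = ((n-k : ℕ):ℝ) + 1 := by
    rw [Nat.cast_sub hk]; ring
  rw [h1, h2, h3, Real.Gamma_nat_eq_factorial, Real.Gamma_nat_eq_factorial,
    Real.Gamma_nat_eq_factorial]
  have hc := Nat.choose_mul_factorial_mul_factorial (Nat.add_le_add_left hk L)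
  have h4 : L + n - (L+k) = n - k := by omega
  rw [h4] at hc
  rw [div_eq_iff (by positivity)]
  rw [← hc]
  push_cast
  ring

lemma gamma_ratio2 (L n : ℕ) (hL : 1 ≤ L) :
    Real.Gamma ((L:ℝ)+n+1) / (Real.Gamma ((n:ℝ)+1) * Real.Gamma (L:ℝ))
      = ((L * (L+n).choose L : ℕ) : ℝ) := by
  have h1 : ((L:ℝ)+(n:ℝ)+1) = ((L+n : ℕ):ℝ) + 1 := by push_cast; ring
  have h2 : ((n:ℝ)+1) = ((n : ℕ):ℝ) + 1 := by norm_num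
  have h3 : (L:ℝ) = ((L-1 : ℕ):ℝ) + 1 := by
    rw [Nat.cast_sub hL]; push_cast; ring
  rw [h1, h2, h3, Real.Gamma_nat_eq_factorial, Real.Gamma_nat_eq_factorial,
    Real.Gamma_nat_eq_factorial]
  have hc := Nat.choose_mul_factorial_mul_factorial (Nat.le_add_right L n)
  have h4 : L + n - L = n := by omega
  rw [h4] at hc
  have h5 : Nat.factorial L = L * Nat.factorial (L-1) := by
    conv_lhs => rw [show L = (L-1)+1 by omega]
    rw [Nat.factorial_succ]; congr 1; omega
  rw [div_eq_iff (by positivity), ← hc, h5]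
  push_cast
  ring

lemma gamma_ratio3 (L n m : ℕ) (hm : m + 1 ≤ n) :
    Real.Gamma ((L:ℝ)+n+1)
      = (((n-m) * (L+n).choose (L+m) : ℕ) : ℝ)
        * (Real.Gamma ((L:ℝ)+m+1) * Real.Gamma ((n:ℝ)-m)) := by
  have h1 : ((L:ℝ)+(n:ℝ)+1) = ((L+n : ℕ):ℝ) + 1 := by push_cast; ring
  have h2 : ((L:ℝ)+(m:ℝ)+1) = ((L+m : ℕ):ℝ) + 1 := by push_cast; ring
  have h3 : ((n:ℝ)-(m:ℝ)) = ((n-m-1 : ℕ):ℝ) + 1 := by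
    rw [Nat.cast_sub (show 1 ≤ n - m by omega), Nat.cast_sub (show m ≤ n by omega)]
    push_cast; ring
  rw [h1, h2, h3, Real.Gamma_nat_eq_factorial, Real.Gamma_nat_eq_factorial,
    Real.Gamma_nat_eq_factorial]
  have hc := Nat.choose_mul_factorial_mul_factorial
    (Nat.add_le_add_left (show m ≤ n by omega) L)
  have h4 : L + n - (L+m) = n - m := by omega
  rw [h4] at hc
  have h5 : Nat.factorial (n-m) = (n-m) * Nat.factorial (n-m-1) := by
    conv_lhs => rw [show n-m = (n-m-1)+1 by omega]
    rw [Nat.factorial_succ]; congr 1; omega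
  rw [← hc, h5]
  push_cast
  ring

lemma choose_rec (L n : ℕ) (k : ℕ) :
    ((n:ℂ) - (k:ℂ)) * ((L+n).choose (L+k) : ℂ)
      = ((L:ℂ) + (k:ℂ) + 1) * ((L+n).choose (L+k+1) : ℂ) := by
  rcases le_or_gt n k with h | h
  · rcases eq_or_lt_of_le h with rfl | h'
    · simp [Nat.choose_eq_zero_of_lt (show L+n < L+n+1 by omega)]
    · rw [Nat.choose_eq_zero_of_lt (show L+n < L+k by omega),
        Nat.choose_eq_zero_of_lt (show L+n < L+k+1 by omega)]
      simp
  · have hc := Nat.choose_succ_right_eq (L+n) (L+k)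
    have h4 : L + n - (L+k) = n - k := by omega
    rw [h4] at hc
    have h5 : (((L+n).choose (L+k+1) * (L+k+1) : ℕ) : ℂ) = (((L+n).choose (L+k) * (n-k) : ℕ) : ℂ) := by
      exact_mod_cast hc
    push_cast [Nat.cast_sub h.le] at h5
    linear_combination -h5

/-- Closed form of the generating sum `α_m^{(n,L)}(x,ω) = ∑_{s=0}^m g_s^{(n,L)}(x) ω^s`. -/
theorem alpha_closed_form (m L n : ℕ) (hL : 1 ≤ L) (hn : m + 2 ≤ n)
    (x : ℝ) (hx : 0 < x) (hxL : (n : ℝ) * x ≠ L) (ω : ℂ) (hω : ω ≠ 1) :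
    (∑ s ∈ Finset.range (m + 1), ((gP n L s x : ℝ) : ℂ) * ω ^ s)
      = (((x - (L : ℝ) / n) / x : ℝ) : ℂ) *
        (qhatC n L m ((x : ℂ) * ω) (x : ℂ) / (1 - ω) ^ 2
          - ((x : ℂ) * ω) ^ (m + 1) * ((Real.Gamma ((L : ℝ) + n + 1) : ℝ) : ℂ) /
              ((1 - ω) * (1 + (x : ℂ)) *
                ((Real.Gamma ((L : ℝ) + m + 1) * Real.Gamma ((n : ℝ) - m) : ℝ) : ℂ))
          - ω ^ (m + 1) * (((L : ℂ) + m + 1) - ((n : ℂ) - m - 1) * (x : ℂ)) *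
              qhatC n L m (x : ℂ) (x : ℂ) / ((1 + (x : ℂ)) * (1 - ω))
          - ω ^ (m + 1) * qhatC n L m (x : ℂ) (x : ℂ) / (1 - ω) ^ 2) := by
  have hmn : m + 1 ≤ n := by omega
  have hmLEn : m ≤ n := by omega
  have hu : (1:ℂ) - ω ≠ 0 := sub_ne_zero.mpr (Ne.symm hω)
  have hX0 : (x:ℂ) ≠ 0 := Complex.ofReal_ne_zero.mpr hx.ne'
  have hP : (1:ℂ) + (x:ℂ) ≠ 0 := by
    have h1 : ((1+x:ℝ):ℂ) ≠ 0 := Complex.ofReal_ne_zero.mpr (by positivity)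
    push_cast at h1
    exact h1
  have hD : (n:ℂ) * (x:ℂ) - (L:ℂ) ≠ 0 := by
    have h1 : (((n:ℝ)*x - L : ℝ):ℂ) ≠ 0 := Complex.ofReal_ne_zero.mpr (sub_ne_zero.mpr hxL)
    push_cast at h1
    exact h1
  have hnc : (n:ℂ) ≠ 0 := Nat.cast_ne_zero.mpr (by omega)
  set E' : ℂ := (L:ℂ) * ((L+n).choose L : ℂ) / ((n:ℂ)*(x:ℂ) - (L:ℂ)) with hE'def
  have hE : ((n:ℂ)*(x:ℂ) - (L:ℂ)) * E' = (L:ℂ) * ((L+n).choose L : ℂ) := by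
    rw [hE'def, mul_comm, div_mul_cancel₀ _ hD]
  have hcore := core_identity m (x:ℂ) ω E' (L:ℂ) (n:ℂ)
      (fun k => ((L+n).choose (L+k) : ℂ)) (fun k => choose_rec L n k) hu hP hE
  beta_reduce at hcore
  have hLHS : (∑ s ∈ Finset.range (m + 1), ((gP n L s x : ℝ) : ℂ) * ω ^ s)
      = (((x - (L : ℝ) / n) / x : ℝ) : ℂ) *
        ∑ s ∈ Finset.range (m+1),
          (∑ j ∈ Finset.range (s+1),
            (E' + ∑ k ∈ Finset.range (j+1), ((L+n).choose (L+k) : ℂ) * (x:ℂ)^k)) * ω^s := by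
    rw [Finset.mul_sum]
    refine Finset.sum_congr rfl fun s _ => ?_
    have hinner : (∑ j ∈ Finset.range (s+1),
          (E' + ∑ k ∈ Finset.range (j+1), ((L+n).choose (L+k) : ℂ) * (x:ℂ)^k))
        = ((s:ℂ)+1)*E'
          + ∑ k ∈ Finset.range (s+1), ((s:ℂ)+1-(k:ℂ)) * ((L+n).choose (L+k) : ℂ) * (x:ℂ)^k := by
      rw [Finset.sum_add_distrib, Finset.sum_const, Finset.card_range, nsmul_eq_mul,
        sum_sum_eq (fun k => ((L+n).choose (L+k) : ℂ) * (x:ℂ)^k),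
        Finset.sum_congr rfl (fun k _ => by ring :
          ∀ k ∈ Finset.range (s+1), ((s:ℂ)+1-(k:ℂ)) * (((L+n).choose (L+k) : ℂ) * (x:ℂ)^k)
            = ((s:ℂ)+1-(k:ℂ)) * ((L+n).choose (L+k) : ℂ) * (x:ℂ)^k)]
      push_cast
      ring
    rw [hinner]
    simp only [gP]
    push_cast
    rw [hE'def]
    have hD' : (x:ℂ)*(n:ℂ) - (L:ℂ) ≠ 0 := by rw [mul_comm]; exact hD
    field_simp
    ring
  have hq2 : qhatC n L m (x:ℂ) (x:ℂ)
      = (∑ k ∈ Finset.range (m+1), ((L+n).choose (L+k) : ℂ) * (x:ℂ)^k) + E' := by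
    simp only [qhatC, qSC]
    congr 1
    · refine Finset.sum_congr rfl fun k hk => ?_
      have hk' : k ≤ n := by
        have := Finset.mem_range.mp hk; omega
      rw [gamma_ratio1 L n k hk']
      norm_cast
    · rw [gamma_ratio2 L n hL, hE'def]
      push_cast
      ring
  have hq1 : qhatC n L m ((x:ℂ)*ω) (x:ℂ)
      = (∑ k ∈ Finset.range (m+1), ((L+n).choose (L+k) : ℂ) * ((x:ℂ)*ω)^k) + E' := by
    simp only [qhatC, qSC]
    congr 1
    · refine Finset.sum_congr rfl fun k hk => ?_
      have hk' : k ≤ n := by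
        have := Finset.mem_range.mp hk; omega
      rw [gamma_ratio1 L n k hk']
      norm_cast
    · rw [gamma_ratio2 L n hL, hE'def]
      push_cast
      ring
  have hG0 : (Real.Gamma ((L:ℝ)+m+1) * Real.Gamma ((n:ℝ)-m)) ≠ 0 := by
    have g1 : 0 < Real.Gamma ((L:ℝ)+m+1) := Real.Gamma_pos_of_pos (by positivity)
    have g2 : 0 < Real.Gamma ((n:ℝ)-m) := Real.Gamma_pos_of_pos (by
      have h2 : (m:ℝ) < n := by exact_mod_cast (show m < n by omega)
      linarith)
    positivity
  have hGne : ((Real.Gamma ((L:ℝ)+m+1) * Real.Gamma ((n:ℝ)-m) : ℝ) : ℂ) ≠ 0 :=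
    Complex.ofReal_ne_zero.mpr hG0
  have hGam : ((Real.Gamma ((L:ℝ)+n+1) : ℝ) : ℂ)
      = ((n:ℂ)-(m:ℂ)) * ((L+n).choose (L+m) : ℂ)
        * ((Real.Gamma ((L:ℝ)+m+1) * Real.Gamma ((n:ℝ)-m) : ℝ) : ℂ) := by
    rw [gamma_ratio3 L n m hmn]
    push_cast [Nat.cast_sub hmLEn]
    ring
  have hterm : ((x:ℂ)*ω)^(m+1) * ((Real.Gamma ((L:ℝ)+n+1) : ℝ) : ℂ) /
        ((1-ω) * (1+(x:ℂ)) * ((Real.Gamma ((L:ℝ)+m+1) * Real.Gamma ((n:ℝ)-m) : ℝ) : ℂ))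
      = ((x:ℂ)*ω)^(m+1) * (((n:ℂ)-(m:ℂ)) * ((L+n).choose (L+m) : ℂ)) / ((1-ω) * (1+(x:ℂ))) := by
    rw [hGam, show ((x:ℂ)*ω)^(m+1) * (((n:ℂ)-(m:ℂ)) * ((L+n).choose (L+m) : ℂ)
          * ((Real.Gamma ((L:ℝ)+m+1) * Real.Gamma ((n:ℝ)-m) : ℝ) : ℂ))
        = (((x:ℂ)*ω)^(m+1) * (((n:ℂ)-(m:ℂ)) * ((L+n).choose (L+m) : ℂ)))
          * ((Real.Gamma ((L:ℝ)+m+1) * Real.Gamma ((n:ℝ)-m) : ℝ) : ℂ) from by ring,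
      mul_div_mul_right _ _ hGne]
  rw [hLHS, hq1, hq2, hterm, hcore]
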